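/- Let p_1, …, p_k be pairwise coprime positive integers with product n. Then Φ̃_{p_1,…,p_k}(x) is the greatest common divisor in ℤ[x] of the polynomials 1 + x^{n/p_i} + x^{2n/p_i} + … + x^{n(p_i−1)/p_i} for i = 1, …, k. -/

import Mathlib

open Finset Polynomial UniqueFactorizationMonoid

-- parity counting lemma
lemma aux_pow_parity {α : Type*} [DecidableEq α] (T : Finset α) :
    (T.powerset.filter (fun J => (T.card - J.card) % 2 = 0)).card
      = (if T = ∅ then 1 else 0)
        + (T.powerset.filter (fun J => (T.card - J.card) % 2 = 1)).card := by
  have hsq : ∀ a : ℕ, (-1 : ℤ) ^ a * (-1) ^ a = 1 := fun a => by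
    rw [← pow_add]; exact Even.neg_one_pow ⟨a, rfl⟩
  have h2 : ∀ J ∈ T.powerset, (-1 : ℤ) ^ (T.card - J.card) = (-1) ^ T.card * (-1) ^ J.card := by
    intro J hJ
    have hle : J.card ≤ T.card := Finset.card_le_card (Finset.mem_powerset.mp hJ)
    have h3 : (-1 : ℤ) ^ (T.card - J.card) * (-1) ^ J.card = (-1) ^ T.card := by
      rw [← pow_add]; congr 1; omega
    calc (-1 : ℤ) ^ (T.card - J.card)
        = (-1 : ℤ) ^ (T.card - J.card) * ((-1) ^ J.card * (-1) ^ J.card) := by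
          rw [hsq, mul_one]
      _ = ((-1 : ℤ) ^ (T.card - J.card) * (-1) ^ J.card) * (-1) ^ J.card := by ring
      _ = (-1) ^ T.card * (-1) ^ J.card := by rw [h3]
  have key : ∑ J ∈ T.powerset, (-1 : ℤ) ^ (T.card - J.card) = if T = ∅ then 1 else 0 := by
    rw [Finset.sum_congr rfl h2, ← Finset.mul_sum, Finset.sum_powerset_neg_one_pow_card]
    by_cases hT : T = ∅
    · simp [hT]
    · simp [hT]
  have hsplit : ∑ J ∈ T.powerset, (-1 : ℤ) ^ (T.card - J.card)
      = ((T.powerset.filter (fun J => (T.card - J.card) % 2 = 0)).card : ℤ)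
        - ((T.powerset.filter (fun J => (T.card - J.card) % 2 = 1)).card : ℤ) := by
    rw [← Finset.sum_filter_add_sum_filter_not T.powerset (fun J => (T.card - J.card) % 2 = 0)]
    have e1 : ∑ J ∈ T.powerset.filter (fun J => (T.card - J.card) % 2 = 0),
        (-1 : ℤ) ^ (T.card - J.card)
        = ((T.powerset.filter (fun J => (T.card - J.card) % 2 = 0)).card : ℤ) := by
      rw [Finset.sum_congr rfl (fun J hJ => ?_), Finset.sum_const, nsmul_eq_mul, mul_one]
      exact Even.neg_one_pow (Nat.even_iff.mpr (Finset.mem_filter.mp hJ).2)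
    have hfc : T.powerset.filter (fun J => ¬ (T.card - J.card) % 2 = 0)
        = T.powerset.filter (fun J => (T.card - J.card) % 2 = 1) := by
      apply Finset.filter_congr; intro J _; constructor <;> intro h <;> omega
    have e2 : ∑ J ∈ T.powerset.filter (fun J => ¬ (T.card - J.card) % 2 = 0),
        (-1 : ℤ) ^ (T.card - J.card)
        = -((T.powerset.filter (fun J => (T.card - J.card) % 2 = 1)).card : ℤ) := by
      rw [hfc, Finset.sum_congr rfl (fun J hJ => ?_), Finset.sum_const, nsmul_eq_mul, mul_neg_one]
      exact Odd.neg_one_pow (Nat.odd_iff.mpr (Finset.mem_filter.mp hJ).2)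
    rw [e1, e2]; ring
  rw [hsplit] at key
  by_cases hT : T = ∅ <;> simp [hT] at key ⊢ <;> omega

lemma aux_card_bij {k : ℕ} (S : Finset (Fin k)) (b : ℕ) :
    (((Finset.univ : Finset (Fin k)).powerset.filter
        (fun I => (k - I.card) % 2 = b)).filter (fun I => S ⊆ I)).card
    = ((Finset.univ \ S).powerset.filter
        (fun J => ((Finset.univ \ S).card - J.card) % 2 = b)).card := by
  have hT : (Finset.univ \ S).card = k - S.card := by
    rw [Finset.card_sdiff_of_subset (Finset.subset_univ S), Finset.card_univ, Fintype.card_fin]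
  apply Finset.card_bij (fun I _ => I \ S)
  · intro I hI
    simp only [Finset.mem_filter, Finset.mem_powerset] at hI ⊢
    obtain ⟨⟨-, hpar⟩, hSI⟩ := hI
    have h1 : I \ S ⊆ Finset.univ \ S :=
      Finset.sdiff_subset_sdiff (Finset.subset_univ I) (Finset.Subset.refl S)
    have hcs : S.card ≤ I.card := Finset.card_le_card hSI
    have hck : I.card ≤ k := by
      simpa [Finset.card_univ] using Finset.card_le_card (Finset.subset_univ I)
    have h2 : (I \ S).card = I.card - S.card := Finset.card_sdiff_of_subset hSI
    refine ⟨h1, ?_⟩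
    rw [hT, h2]
    have : k - S.card - (I.card - S.card) = k - I.card := by omega
    rw [this]; exact hpar
  · intro I1 h1 I2 h2 he
    have hS1 : S ⊆ I1 := (Finset.mem_filter.mp h1).2
    have hS2 : S ⊆ I2 := (Finset.mem_filter.mp h2).2
    calc I1 = I1 \ S ∪ S := (Finset.sdiff_union_of_subset hS1).symm
      _ = I2 \ S ∪ S := by rw [he]
      _ = I2 := Finset.sdiff_union_of_subset hS2
  · intro J hJ
    simp only [Finset.mem_filter, Finset.mem_powerset] at hJ
    obtain ⟨hJT, hpar⟩ := hJ
    have hdisj : Disjoint J S :=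
      Finset.disjoint_of_subset_left hJT Finset.sdiff_disjoint
    refine ⟨J ∪ S, ?_, ?_⟩
    · simp only [Finset.mem_filter, Finset.mem_powerset]
      have hcard : (J ∪ S).card = J.card + S.card := Finset.card_union_of_disjoint hdisj
      have hJle : J.card ≤ k - S.card := by
        have := Finset.card_le_card hJT; omega
      have hsk : S.card ≤ k := by
        simpa [Finset.card_univ] using Finset.card_le_card (Finset.subset_univ S)
      refine ⟨⟨Finset.subset_univ _, ?_⟩, Finset.subset_union_right⟩
      rw [hcard]
      have : k - (J.card + S.card) = k - S.card - J.card := by omega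
      rw [this, ← hT]; exact hpar
    · rw [Finset.union_sdiff_right]
      exact Finset.sdiff_eq_self_of_disjoint hdisj

lemma aux_comb {k : ℕ} (S : Finset (Fin k)) :
    (((Finset.univ : Finset (Fin k)).powerset.filter
        (fun I => (k - I.card) % 2 = 0)).filter (fun I => S ⊆ I)).card
    = (if S = Finset.univ then 1 else 0)
      + (((Finset.univ : Finset (Fin k)).powerset.filter
          (fun I => (k - I.card) % 2 = 1)).filter (fun I => S ⊆ I)).card := by
  rw [aux_card_bij S 0, aux_card_bij S 1, aux_pow_parity]
  congr 1
  have : Finset.univ \ S = ∅ ↔ S = Finset.univ := by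
    rw [Finset.sdiff_eq_empty_iff_subset]
    exact ⟨fun h => Finset.univ_subset_iff.mp h, fun h => h ▸ Finset.Subset.refl _⟩
  simp only [this]

lemma aux_nf_cyclo (A : Finset ℕ) (hA : ∀ d ∈ A, 0 < d) :
    normalizedFactors (∏ d ∈ A, Polynomial.cyclotomic d ℚ)
      = A.val.map (fun d => Polynomial.cyclotomic d ℚ) := by
  induction A using Finset.induction_on with
  | empty => simp
  | insert a A' ha ih =>
    have hpos : 0 < a := hA a (Finset.mem_insert_self a A')
    have hmon : (∏ d ∈ A', Polynomial.cyclotomic d ℚ).Monic :=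
      Polynomial.monic_prod_of_monic _ _ fun d _ => Polynomial.cyclotomic.monic d ℚ
    rw [Finset.prod_insert ha,
      normalizedFactors_mul (Polynomial.cyclotomic_ne_zero a ℚ) hmon.ne_zero,
      normalizedFactors_irreducible (Polynomial.cyclotomic.irreducible_rat hpos),
      (Polynomial.cyclotomic.monic a ℚ).normalize_eq_self,
      ih (fun d hd => hA d (Finset.mem_insert_of_mem hd)),
      Finset.insert_val_of_notMem ha, Multiset.map_cons, Multiset.singleton_add]

theorem pseudocyclotomic_is_gcd (k : ℕ) (hk : 0 < k) (p : Fin k → ℕ)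
    (hp : ∀ i, 0 < p i)
    (hcop : ∀ i j, i ≠ j → Nat.Coprime (p i) (p j))
    (n : ℕ) (hn : n = ∏ i, p i)
    (f : Polynomial ℤ)
    (hf : (∏ I ∈ (Finset.univ : Finset (Fin k)).powerset.filter
              (fun I => (k - I.card) % 2 = 1),
            ((Polynomial.X : Polynomial ℤ) ^ (∏ i ∈ I, p i) - 1)) * f =
          ∏ I ∈ (Finset.univ : Finset (Fin k)).powerset.filter
              (fun I => (k - I.card) % 2 = 0),
            ((Polynomial.X : Polynomial ℤ) ^ (∏ i ∈ I, p i) - 1)) :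
    (∀ i, f ∣ ∑ j ∈ Finset.range (p i), (Polynomial.X : Polynomial ℤ) ^ (j * (n / p i))) ∧
    ∀ g : Polynomial ℤ,
      (∀ i, g ∣ ∑ j ∈ Finset.range (p i), (Polynomial.X : Polynomial ℤ) ^ (j * (n / p i))) →
        g ∣ f := by
  have hn0 : 0 < n := hn ▸ Finset.prod_pos fun i _ => hp i
  have hpd : ∀ i, p i ∣ n := fun i => hn ▸ Finset.dvd_prod_of_mem p (Finset.mem_univ i)
  have hm : ∀ i, n / p i * p i = n := fun i => Nat.div_mul_cancel (hpd i)
  have hm0 : ∀ i, 0 < n / p i := fun i => Nat.div_pos (Nat.le_of_dvd hn0 (hpd i)) (hp i)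
  -- coprimality of n / p i with p i
  have hcop' : ∀ i, Nat.Coprime (n / p i) (p i) := by
    intro i
    have he : n / p i = ∏ j ∈ Finset.univ.erase i, p j := by
      rw [hn, ← Finset.prod_erase_mul Finset.univ p (Finset.mem_univ i),
        Nat.mul_div_cancel _ (hp i)]
    rw [he]
    exact Nat.Coprime.prod_left fun j hj => hcop j i (Finset.ne_of_mem_erase hj)
  have hdiff : ∀ i, ∀ d, d ∣ n → (d ∣ n / p i ↔ Nat.Coprime d (p i)) := by
    intro i d hd
    constructor
    · intro h; exact Nat.Coprime.coprime_dvd_left h (hcop' i)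
    · intro h; exact h.dvd_of_dvd_mul_right (by rwa [hm i] )
  set Φ : ℕ → Polynomial ℤ := fun d => Polynomial.cyclotomic d ℤ with hΦ
  set A : Fin k → Finset ℕ :=
    fun i => n.divisors.filter (fun d => ¬ Nat.Coprime d (p i)) with hA
  set D : Finset ℕ :=
    n.divisors.filter (fun d => ∀ i, ¬ Nat.Coprime d (p i)) with hD
  -- Step A : sums are products of cyclotomics
  have stepA : ∀ i, ∑ j ∈ Finset.range (p i), (Polynomial.X : Polynomial ℤ) ^ (j * (n / p i))
      = ∏ d ∈ A i, Φ d := by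
    intro i
    have hgeom : (∑ j ∈ Finset.range (p i), (Polynomial.X : Polynomial ℤ) ^ (j * (n / p i)))
        * ((Polynomial.X : Polynomial ℤ) ^ (n / p i) - 1)
        = (Polynomial.X : Polynomial ℤ) ^ n - 1 := by
      have e1 : ∀ j ∈ Finset.range (p i), (Polynomial.X : Polynomial ℤ) ^ (j * (n / p i))
          = ((Polynomial.X : Polynomial ℤ) ^ (n / p i)) ^ j := fun j _ => by
        rw [← pow_mul, mul_comm]
      rw [Finset.sum_congr rfl e1, geom_sum_mul, ← pow_mul, hm i]
    have hmdvd : n / p i ∣ n := ⟨p i, (hm i).symm⟩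
    have huni : (n / p i).divisors ∪ A i = n.divisors := by
      ext d
      simp only [Finset.mem_union, Nat.mem_divisors, hA, Finset.mem_filter]
      constructor
      · rintro (⟨h1, _⟩ | ⟨h1, _⟩)
        · exact ⟨h1.trans hmdvd, hn0.ne'⟩
        · exact h1
      · intro h1
        by_cases hc : Nat.Coprime d (p i)
        · exact Or.inl ⟨(hdiff i d h1.1).mpr hc, (hm0 i).ne'⟩
        · exact Or.inr ⟨h1, hc⟩
    have hdisj : Disjoint (n / p i).divisors (A i) := by
      rw [Finset.disjoint_left]
      intro d hd hdA
      exact (Finset.mem_filter.mp hdA).2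
        (Nat.Coprime.coprime_dvd_left (Nat.dvd_of_mem_divisors hd) (hcop' i))
    have hXn : (Polynomial.X : Polynomial ℤ) ^ n - 1
        = ((Polynomial.X : Polynomial ℤ) ^ (n / p i) - 1) * ∏ d ∈ A i, Φ d := by
      rw [← Polynomial.prod_cyclotomic_eq_X_pow_sub_one hn0 ℤ, ← huni,
        Finset.prod_union hdisj, Polynomial.prod_cyclotomic_eq_X_pow_sub_one (hm0 i) ℤ]
    have hne : ((Polynomial.X : Polynomial ℤ) ^ (n / p i) - 1) ≠ 0 := by
      have := Polynomial.X_pow_sub_C_ne_zero (hm0 i) (1 : ℤ)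
      simpa using this
    apply mul_right_cancel₀ hne
    rw [hgeom, hXn, mul_comm]

  -- Step B : f is the product of cyclotomics over D
  have hq0 : ∀ I : Finset (Fin k), 0 < ∏ i ∈ I, p i :=
    fun I => Finset.prod_pos fun i _ => hp i
  have hqd : ∀ I : Finset (Fin k), (∏ i ∈ I, p i) ∣ n :=
    fun I => hn ▸ Finset.prod_dvd_prod_of_subset I Finset.univ p (Finset.subset_univ I)
  have hXq : ∀ I : Finset (Fin k), (Polynomial.X : Polynomial ℤ) ^ (∏ i ∈ I, p i) - 1
      = ∏ d ∈ n.divisors, (if d ∣ ∏ i ∈ I, p i then Φ d else 1) := by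
    intro I
    have hfe : n.divisors.filter (fun d => d ∣ ∏ i ∈ I, p i) = (∏ i ∈ I, p i).divisors := by
      ext d
      simp only [Finset.mem_filter, Nat.mem_divisors]
      constructor
      · rintro ⟨_, h2⟩; exact ⟨h2, (hq0 I).ne'⟩
      · rintro ⟨h1, _⟩; exact ⟨⟨h1.trans (hqd I), hn0.ne'⟩, h1⟩
    rw [← Finset.prod_filter, hfe, Polynomial.prod_cyclotomic_eq_X_pow_sub_one (hq0 I) ℤ]
  have hprodeq : ∀ b : ℕ,
      (∏ I ∈ (Finset.univ : Finset (Fin k)).powerset.filter (fun I => (k - I.card) % 2 = b),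
        ((Polynomial.X : Polynomial ℤ) ^ (∏ i ∈ I, p i) - 1))
      = ∏ d ∈ n.divisors, Φ d ^
          ((((Finset.univ : Finset (Fin k)).powerset.filter (fun I => (k - I.card) % 2 = b)).filter
            (fun I => d ∣ ∏ i ∈ I, p i)).card) := by
    intro b
    rw [Finset.prod_congr rfl (fun I _ => hXq I), Finset.prod_comm]
    refine Finset.prod_congr rfl fun d _ => ?_
    rw [← Finset.prod_filter, Finset.prod_const]
  -- the key iff
  have hkey : ∀ d ∈ n.divisors, ∀ I : Finset (Fin k),
      ((d ∣ ∏ i ∈ I, p i) ↔ Finset.univ.filter (fun i => ¬ Nat.Coprime d (p i)) ⊆ I) := by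
    intro d hd I
    constructor
    · intro h i hi
      simp only [Finset.mem_filter] at hi
      by_contra hiI
      refine hi.2 (Nat.Coprime.coprime_dvd_left h ?_)
      exact Nat.Coprime.prod_left fun j hj => hcop j i (fun hji => hiI (hji ▸ hj))
    · intro hS
      have hc : Nat.Coprime d (∏ i ∈ Finset.univ \ I, p i) := by
        refine Nat.Coprime.prod_right fun j hj => ?_
        have hjI : j ∉ I := (Finset.mem_sdiff.mp hj).2
        have : j ∉ Finset.univ.filter (fun i => ¬ Nat.Coprime d (p i)) :=
          fun hmem => hjI (hS hmem)
        simp only [Finset.mem_filter, Finset.mem_univ, true_and, not_not] at this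
        exact this
      have hnn : n = (∏ i ∈ Finset.univ \ I, p i) * ∏ i ∈ I, p i := by
        rw [Finset.prod_sdiff (Finset.subset_univ I), ← hn]
      exact hc.dvd_of_dvd_mul_left (by rw [← hnn]; exact Nat.dvd_of_mem_divisors hd)
  -- the card identity
  have hcard : ∀ d ∈ n.divisors,
      ((((Finset.univ : Finset (Fin k)).powerset.filter (fun I => (k - I.card) % 2 = 0)).filter
          (fun I => d ∣ ∏ i ∈ I, p i)).card)
      = (if (∀ i, ¬ Nat.Coprime d (p i)) then 1 else 0)
        + ((((Finset.univ : Finset (Fin k)).powerset.filter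
              (fun I => (k - I.card) % 2 = 1)).filter (fun I => d ∣ ∏ i ∈ I, p i)).card) := by
    intro d hd
    have hrw : ∀ b : ℕ,
        (((Finset.univ : Finset (Fin k)).powerset.filter (fun I => (k - I.card) % 2 = b)).filter
            (fun I => d ∣ ∏ i ∈ I, p i))
        = (((Finset.univ : Finset (Fin k)).powerset.filter (fun I => (k - I.card) % 2 = b)).filter
            (fun I => Finset.univ.filter (fun i => ¬ Nat.Coprime d (p i)) ⊆ I)) := by
      intro b
      exact Finset.filter_congr fun I _ => hkey d hd I
    rw [hrw 0, hrw 1, aux_comb]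
    congr 1
    have : (Finset.univ.filter (fun i => ¬ Nat.Coprime d (p i)) = Finset.univ)
        ↔ (∀ i, ¬ Nat.Coprime d (p i)) := by
      rw [Finset.eq_univ_iff_forall]
      constructor
      · intro h i; exact (Finset.mem_filter.mp (h i)).2
      · intro h i; exact Finset.mem_filter.mpr ⟨Finset.mem_univ i, h i⟩
    simp only [this]
  -- conclude f = ∏ d in D, Φ d
  have hfD : f = ∏ d ∈ D, Φ d := by
    have hEO : (∏ I ∈ (Finset.univ : Finset (Fin k)).powerset.filter
          (fun I => (k - I.card) % 2 = 0),
          ((Polynomial.X : Polynomial ℤ) ^ (∏ i ∈ I, p i) - 1))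
        = (∏ d ∈ D, Φ d) * ∏ I ∈ (Finset.univ : Finset (Fin k)).powerset.filter
            (fun I => (k - I.card) % 2 = 1),
            ((Polynomial.X : Polynomial ℤ) ^ (∏ i ∈ I, p i) - 1) := by
      rw [hprodeq 0, hprodeq 1,
        Finset.prod_congr rfl (fun d hd => by rw [hcard d hd, pow_add]),
        Finset.prod_mul_distrib]
      congr 1
      rw [hD, Finset.prod_filter]
      refine Finset.prod_congr rfl fun d _ => ?_
      split_ifs <;> simp
    rw [hEO] at hf
    have hOne : (∏ I ∈ (Finset.univ : Finset (Fin k)).powerset.filter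
          (fun I => (k - I.card) % 2 = 1),
          ((Polynomial.X : Polynomial ℤ) ^ (∏ i ∈ I, p i) - 1)) ≠ 0 := by
      rw [Finset.prod_ne_zero_iff]
      intro I _
      have := Polynomial.X_pow_sub_C_ne_zero (hq0 I) (1 : ℤ)
      simpa using this
    apply mul_left_cancel₀ hOne
    rw [hf]; ring
  -- conclusion
  have hDsub : ∀ i, D ⊆ A i := by
    intro i d hd
    have := Finset.mem_filter.mp hd
    exact Finset.mem_filter.mpr ⟨this.1, this.2 i⟩
  constructor
  · intro i
    rw [stepA i, hfD]
    exact Finset.prod_dvd_prod_of_subset D (A i) Φ (hDsub i)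
  · intro g hg
    set i0 : Fin k := ⟨0, hk⟩
    have hg' : ∀ i, g ∣ ∏ d ∈ A i, Φ d := fun i => (stepA i) ▸ hg i
    have hSmon : ∀ i, (∏ d ∈ A i, Φ d).Monic :=
      fun i => Polynomial.monic_prod_of_monic _ _ fun d _ => Polynomial.cyclotomic.monic d ℤ
    have hfmon : (∏ d ∈ D, Φ d).Monic :=
      Polynomial.monic_prod_of_monic _ _ fun d _ => Polynomial.cyclotomic.monic d ℤ
    have hgprim : g.IsPrimitive :=
      Polynomial.isPrimitive_of_dvd (hSmon i0).isPrimitive (hg' i0)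
    have hg0 : g ≠ 0 := by
      intro h
      exact (hSmon i0).ne_zero (zero_dvd_iff.mp (h ▸ hg' i0))
    rw [hfD, Polynomial.IsPrimitive.Int.dvd_iff_map_cast_dvd_map_cast g _ hgprim]
    set gq := g.map (Int.castRingHom ℚ) with hgq
    have hgq0 : gq ≠ 0 := by
      rw [hgq, Ne, Polynomial.map_eq_zero_iff (Int.cast_injective (α := ℚ))]
      exact hg0
    have hmapA : ∀ i, Polynomial.map (Int.castRingHom ℚ) (∏ d ∈ A i, Φ d)
        = ∏ d ∈ A i, Polynomial.cyclotomic d ℚ := by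
      intro i
      simp only [Polynomial.map_prod, hΦ, Polynomial.map_cyclotomic]
    have hmapD : Polynomial.map (Int.castRingHom ℚ) (∏ d ∈ D, Φ d)
        = ∏ d ∈ D, Polynomial.cyclotomic d ℚ := by
      simp only [Polynomial.map_prod, hΦ, Polynomial.map_cyclotomic]
    have hqmonA : ∀ i, (∏ d ∈ A i, Polynomial.cyclotomic d ℚ).Monic :=
      fun i => Polynomial.monic_prod_of_monic _ _ fun d _ => Polynomial.cyclotomic.monic d ℚ
    have hqmonD : (∏ d ∈ D, Polynomial.cyclotomic d ℚ).Monic :=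
      Polynomial.monic_prod_of_monic _ _ fun d _ => Polynomial.cyclotomic.monic d ℚ
    have hgqA : ∀ i, gq ∣ ∏ d ∈ A i, Polynomial.cyclotomic d ℚ := by
      intro i
      have := Polynomial.map_dvd (Int.castRingHom ℚ) (hg' i)
      rwa [hmapA i] at this
    have hposA : ∀ i, ∀ d ∈ A i, 0 < d :=
      fun i d hd => Nat.pos_of_mem_divisors (Finset.mem_filter.mp hd).1
    have hposD : ∀ d ∈ D, 0 < d :=
      fun d hd => Nat.pos_of_mem_divisors (Finset.mem_filter.mp hd).1
    have hM : ∀ i, normalizedFactors gq ≤ (A i).val.map (fun d => Polynomial.cyclotomic d ℚ) := by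
      intro i
      rw [← aux_nf_cyclo (A i) (hposA i)]
      exact (dvd_iff_normalizedFactors_le_normalizedFactors hgq0 (hqmonA i).ne_zero).mp (hgqA i)
    rw [hmapD, dvd_iff_normalizedFactors_le_normalizedFactors hgq0 hqmonD.ne_zero,
      aux_nf_cyclo D hposD, Multiset.le_iff_count]
    intro q
    by_cases hq : q ∈ normalizedFactors gq
    · have h1 : ∀ i, q ∈ (A i).val.map (fun d => Polynomial.cyclotomic d ℚ) :=
        fun i => Multiset.mem_of_le (hM i) hq
      obtain ⟨d, hd0, hdq⟩ := Multiset.mem_map.mp (h1 i0)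
      have hdAi : ∀ i, d ∈ A i := by
        intro i
        obtain ⟨d', hd', hd'q⟩ := Multiset.mem_map.mp (h1 i)
        have hdd : d' = d := Polynomial.cyclotomic_injective (hd'q.trans hdq.symm)
        exact Finset.mem_def.mpr (hdd ▸ hd')
      have hdD : d ∈ D := Finset.mem_filter.mpr
        ⟨(Finset.mem_filter.mp (hdAi i0)).1, fun i => (Finset.mem_filter.mp (hdAi i)).2⟩
      have hnd : ((A i0).val.map (fun d => Polynomial.cyclotomic d ℚ)).Nodup :=
        Multiset.Nodup.map Polynomial.cyclotomic_injective (A i0).nodup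
      have hle1 : Multiset.count q (normalizedFactors gq)
          ≤ Multiset.count q ((A i0).val.map (fun d => Polynomial.cyclotomic d ℚ)) :=
        Multiset.le_iff_count.mp (hM i0) q
      have hle2 : Multiset.count q ((A i0).val.map (fun d => Polynomial.cyclotomic d ℚ)) ≤ 1 :=
        Multiset.nodup_iff_count_le_one.mp hnd q
      have hge : 1 ≤ Multiset.count q (D.val.map (fun d => Polynomial.cyclotomic d ℚ)) :=
        Multiset.one_le_count_iff_mem.mpr
          (Multiset.mem_map.mpr ⟨d, Finset.mem_def.mp hdD, hdq⟩)
      omega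
    · rw [Multiset.count_eq_zero_of_notMem hq]
      exact Nat.zero_le _
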